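/- Let x₀ = 3 − 2√2 and suppose y is a twice-differentiable real function near x₀ with y(x₀) = x₀, y′(x₀) = −1, satisfying Ψ₂(x, y(x)) = 0 identically with Ψ₂(X,Y) = Y³ + (2X − X²)Y² + (−X + 2X²)Y + X³. Then y″(x₀) = −16 − 25/√2. -/

import Mathlib

/-- Implicit second derivative of the level-2 modular equation for 39+39
at the fixed point x₀ = 3 − 2√2. -/
theorem psi2_implicit_second_deriv
    (x₀ : ℝ) (hx₀ : x₀ = 3 - 2 * Real.sqrt 2)
    (y : ℝ → ℝ)
    (hy : ∀ᶠ x in nhds x₀, DifferentiableAt ℝ y x)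
    (hy' : DifferentiableAt ℝ (deriv y) x₀)
    (hyx₀ : y x₀ = x₀) (hy'x₀ : deriv y x₀ = -1)
    (heq : ∀ᶠ x in nhds x₀,
      (y x) ^ 3 + (2 * x - x ^ 2) * (y x) ^ 2 + (-x + 2 * x ^ 2) * (y x) + x ^ 3 = 0) :
    deriv (deriv y) x₀ = -16 - 25 / Real.sqrt 2 := by
  have hs : Real.sqrt 2 ^ 2 = 2 := Real.sq_sqrt (by norm_num)
  have hs0 : (0:ℝ) < Real.sqrt 2 := Real.sqrt_pos.mpr (by norm_num)
  set s := Real.sqrt 2 with hsdef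
  -- The first implicit derivative equation holds eventually.
  have hF : ∀ᶠ x in nhds x₀,
      deriv (fun x => (y x) ^ 3 + (2 * x - x ^ 2) * (y x) ^ 2 + (-x + 2 * x ^ 2) * (y x) + x ^ 3) x
        = 3 * (y x ^ 2 * deriv y x) +
          ((2 - 2*x) * y x ^ 2 + (2*x - x^2) * (2 * (y x * deriv y x))) +
          ((-1 + 4*x) * y x + (-x + 2*x^2) * deriv y x) + 3 * x^2 := by
    filter_upwards [hy] with x hdy
    have hYd := hdy.hasDerivAt
    have hp : HasDerivAt (fun x : ℝ => 2 * x - x ^ 2) (2 * 1 - ↑2 * x ^ (2-1)) x :=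
      ((hasDerivAt_id' x).const_mul 2).sub (hasDerivAt_pow 2 x)
    have hq : HasDerivAt (fun x : ℝ => -x + 2 * x ^ 2) (-1 + 2 * (↑2 * x ^ (2-1))) x :=
      (hasDerivAt_id' x).neg.add ((hasDerivAt_pow 2 x).const_mul 2)
    have H := (((hYd.pow 3).add (hp.mul (hYd.pow 2))).add (hq.mul hYd)).add (hasDerivAt_pow 3 x)
    refine H.deriv.trans ?_
    simp only [Pi.pow_apply, Pi.mul_apply]
    push_cast
    ring
  have heq' : (fun x => (y x) ^ 3 + (2 * x - x ^ 2) * (y x) ^ 2 + (-x + 2 * x ^ 2) * (y x) + x ^ 3)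
      =ᶠ[nhds x₀] (fun _ => (0:ℝ)) := heq
  have hG0 : (fun x => 3 * (y x ^ 2 * deriv y x) +
          ((2 - 2*x) * y x ^ 2 + (2*x - x^2) * (2 * (y x * deriv y x))) +
          ((-1 + 4*x) * y x + (-x + 2*x^2) * deriv y x) + 3 * x^2)
      =ᶠ[nhds x₀] (fun _ => (0:ℝ)) := by
    have hd := heq'.deriv
    filter_upwards [hF, hd] with x h1 h2
    rw [← h1, h2]
    simp
  have hval : deriv (fun x => 3 * (y x ^ 2 * deriv y x) +
          ((2 - 2*x) * y x ^ 2 + (2*x - x^2) * (2 * (y x * deriv y x))) +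
          ((-1 + 4*x) * y x + (-x + 2*x^2) * deriv y x) + 3 * x^2) x₀ = 0 := by
    rw [hG0.deriv_eq]
    simp
  -- second derivative via HasDerivAt at x₀
  have hY0 : HasDerivAt y (deriv y x₀) x₀ := (hy.self_of_nhds).hasDerivAt
  have hd0 : HasDerivAt (deriv y) (deriv (deriv y) x₀) x₀ := hy'.hasDerivAt
  have hp : HasDerivAt (fun x : ℝ => 2 - 2 * x) (0 - 2 * 1) x₀ :=
    (hasDerivAt_const x₀ (2:ℝ)).sub ((hasDerivAt_id' x₀).const_mul 2)
  have hp2 : HasDerivAt (fun x : ℝ => 2 * x - x ^ 2) (2 * 1 - ↑2 * x₀ ^ (2-1)) x₀ :=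
    ((hasDerivAt_id' x₀).const_mul 2).sub (hasDerivAt_pow 2 x₀)
  have hr : HasDerivAt (fun x : ℝ => -1 + 4 * x) (0 + 4 * 1) x₀ :=
    (hasDerivAt_const x₀ (-1:ℝ)).add ((hasDerivAt_id' x₀).const_mul 4)
  have hq : HasDerivAt (fun x : ℝ => -x + 2 * x ^ 2) (-1 + 2 * (↑2 * x₀ ^ (2-1))) x₀ :=
    (hasDerivAt_id' x₀).neg.add ((hasDerivAt_pow 2 x₀).const_mul 2)
  have H := ((((hY0.pow 2).mul hd0).const_mul 3).add
      ((hp.mul (hY0.pow 2)).add (hp2.mul ((hY0.mul hd0).const_mul 2)))).add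
      ((hr.mul hY0).add (hq.mul hd0)) |>.add ((hasDerivAt_pow 2 x₀).const_mul 3)
  have hD0 := H.deriv.symm.trans hval
  simp only [Pi.pow_apply, Pi.mul_apply] at hD0
  rw [hy'x₀, hyx₀] at hD0
  set e := deriv (deriv y) x₀ with he
  rw [hx₀] at hD0
  push_cast at hD0
  have key : e * (34*s - 48) + (82 - 56*s) = 0 := by
    linear_combination hD0 + (36*e - 16*e*s - 16) * hs
  have h25 : (25:ℝ) / s = 25 * s / 2 := by
    rw [div_eq_div_iff (ne_of_gt hs0) two_ne_zero]
    linear_combination (-25) * hs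
  rw [h25]
  linear_combination ((34*s+48)/8) * key + (238 - 289*e/2) * hs
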